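/- Let K be a valuation field of height 1, M an almost finitely generated torsion-free O_K-module, and S ⊆ M a subset generating M as an O_K-module. Then M has finite rank d, and for every π ∈ m̃_K there exist elements s_1, …, s_d ∈ S that are linearly independent over O_K and such that the O_K-submodule they generate contains π·M. -/

import Mathlib

open TensorProduct Matrix


lemma aux_dvd {K : Type*} [Field K] (OK : ValuationSubring K)
    (v : Valuation K NNReal) (hv : ∀ x : K, v x ≤ 1 ↔ x ∈ OK)
    (a b : ↥OK) (h : v ↑a ≤ v ↑b) : ∃ c : ↥OK, a = b * c := by
  by_cases hb : (b : K) = 0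
  · have ha : (a : K) = 0 := by
      rw [hb] at h; simpa using h
    exact ⟨0, by ext; simpa using ha⟩
  · have hmem : (↑a / ↑b : K) ∈ OK := by
      rw [← hv, map_div₀]
      exact div_le_one_of_le₀ h (zero_le)
    refine ⟨⟨_, hmem⟩, ?_⟩
    ext
    push_cast
    field_simp

lemma aux_extract {K : Type*} [Field K] (OK : ValuationSubring K)
    (v : Valuation K NNReal) (hv : ∀ x : K, v x ≤ 1 ↔ x ∈ OK)
    {M : Type*} [AddCommGroup M] [Module ↥OK M]
    (htf : ∀ (r : ↥OK) (x : M), r • x = 0 → r = 0 ∨ x = 0) :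
    ∀ (n : ℕ) (x : Fin n → M), ∃ (m : ℕ) (y : Fin m → M),
      (∀ j, ∃ i, y j = x i) ∧ LinearIndependent ↥OK y ∧
      Submodule.span ↥OK (Set.range y) = Submodule.span ↥OK (Set.range x) := by
  intro n
  induction n with
  | zero =>
    intro x
    refine ⟨0, Fin.elim0, fun j => j.elim0, linearIndependent_empty_type, ?_⟩
    rw [Set.range_eq_empty, Set.range_eq_empty]
  | succ n ih =>
    intro x
    by_cases hli : LinearIndependent ↥OK x
    · exact ⟨n + 1, x, fun j => ⟨j, rfl⟩, hli, rfl⟩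
    obtain ⟨g, hgsum, i1, hi1⟩ := Fintype.not_linearIndependent_iff.mp hli
    obtain ⟨i0, hi0⟩ := Finite.exists_max (fun i => v ↑(g i))
    have hgi0 : g i0 ≠ 0 := by
      intro h0
      apply hi1
      have := hi0 i1
      rw [h0] at this
      simp only [ZeroMemClass.coe_zero, map_zero, le_zero_iff] at this
      have : (g i1 : K) = 0 := (Valuation.zero_iff v).mp this
      exact_mod_cast Subtype.ext this
    -- divide all coefficients by g i0
    have hc : ∀ k : Fin n, ∃ c : ↥OK, g (i0.succAbove k) = g i0 * c := fun k =>
      aux_dvd OK v hv _ _ (hi0 (i0.succAbove k))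
    choose c hc using hc
    have hx0 : x i0 = -∑ k : Fin n, c k • x (i0.succAbove k) := by
      have h1 : g i0 • (x i0 + ∑ k : Fin n, c k • x (i0.succAbove k)) = 0 := by
        rw [smul_add, Finset.smul_sum]
        have : ∀ k : Fin n, g i0 • c k • x (i0.succAbove k)
            = g (i0.succAbove k) • x (i0.succAbove k) := by
          intro k; rw [smul_smul, ← hc k]
        simp_rw [this]
        rw [← Fin.sum_univ_succAbove (fun j => g j • x j) i0] at *
        exact hgsum
      rcases htf _ _ h1 with h | h
      · exact absurd h hgi0
      · rw [add_eq_zero_iff_eq_neg] at h; exact h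
    obtain ⟨m, y, hy, hyli, hyspan⟩ := ih (x ∘ i0.succAbove)
    refine ⟨m, y, ?_, hyli, ?_⟩
    · intro j; obtain ⟨i, hi⟩ := hy j; exact ⟨i0.succAbove i, hi⟩
    rw [hyspan]
    apply le_antisymm
    · exact Submodule.span_mono (Set.range_comp_subset_range _ _)
    · rw [Submodule.span_le]
      rintro - ⟨i, rfl⟩
      by_cases hii : i = i0
      · subst hii
        rw [hx0]
        refine neg_mem (Submodule.sum_mem _ fun k _ => Submodule.smul_mem _ _ ?_)
        exact Submodule.subset_span ⟨k, rfl⟩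
      · obtain ⟨k, hk⟩ := Fin.exists_succAbove_eq (Ne.symm (hii : i ≠ i0)).symm
        rw [← hk]
        exact Submodule.subset_span ⟨k, rfl⟩


section
variable {K : Type*} [Field K] (OK : ValuationSubring K)
    {M : Type*} [AddCommGroup M] [Module ↥OK M]
    {V : Type*} [AddCommGroup V] [Module K V] [Module ↥OK V] [IsScalarTower ↥OK K V]

lemma aux_spanK (ι : M →ₗ[↥OK] V) (T : Set M) (m : M)
    (hm : m ∈ Submodule.span ↥OK T) : ι m ∈ Submodule.span K (ι '' T) := by
  induction hm using Submodule.span_induction with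
  | mem z hz => exact Submodule.subset_span ⟨z, hz, rfl⟩
  | zero => rw [map_zero]; exact zero_mem _
  | add a c _ _ ha' hc' => rw [map_add]; exact add_mem ha' hc'
  | smul r a _ ha' =>
    rw [_root_.map_smul, ← algebraMap_smul K r (ι a)]
    exact Submodule.smul_mem _ _ ha'
end


section
variable {K : Type*} [Field K] (OK : ValuationSubring K)
    (v : Valuation K NNReal) (hv : ∀ x : K, v x ≤ 1 ↔ x ∈ OK)
    {M : Type*} [AddCommGroup M] [Module ↥OK M]
    {V : Type*} [AddCommGroup V] [Module K V] [Module ↥OK V] [IsScalarTower ↥OK K V]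

include hv in
lemma aux_core (ι : M →ₗ[↥OK] V) (hinj : Function.Injective ι)
    {d : ℕ} (b : Module.Basis (Fin d) K V)
    (S'' : Set M) (hspan : Submodule.span ↥OK S'' = ⊤)
    (π : ↥OK) (s : Fin d → M)
    (hW : (b.toMatrix (ι ∘ s)).det ≠ 0)
    (hineq : ∀ y ∈ S'', ∀ i, v ↑π * v ((b.toMatrix (ι ∘ Function.update s i y)).det)
       ≤ v ((b.toMatrix (ι ∘ s)).det)) :
    LinearIndependent ↥OK s ∧ ∀ x : M, π • x ∈ Submodule.span ↥OK (Set.range s) := by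
  classical
  set A : Matrix (Fin d) (Fin d) K := b.toMatrix (ι ∘ s) with hA
  have halg : ∀ (r : ↥OK) (w : V), (↑r : K) • w = r • w := by
    intro r w
    exact algebraMap_smul K r w
  have hrepr : ∀ (g : Fin d → K) (j : Fin d),
      b.repr (∑ i, g i • ι (s i)) j = (A *ᵥ g) j := by
    intro g j
    rw [map_sum, Finsupp.coe_finset_sum, Finset.sum_apply]
    simp only [_root_.map_smul, Matrix.mulVec, dotProduct, hA, Module.Basis.toMatrix_apply,
      Function.comp_apply, Finsupp.coe_smul, Pi.smul_apply, smul_eq_mul, mul_comm]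
  have hli : LinearIndependent ↥OK s := by
    rw [Fintype.linearIndependent_iff]
    intro g hg i
    set gK : Fin d → K := fun i => ↑(g i) with hgK
    have h0 : A *ᵥ gK = 0 := by
      funext j
      rw [← hrepr gK j]
      have : ∑ i, gK i • ι (s i) = ι (∑ i, g i • s i) := by
        rw [map_sum]
        exact Finset.sum_congr rfl fun i _ => by
          rw [hgK, _root_.map_smul]; exact halg _ _
      rw [this, hg, map_zero, map_zero]
      rfl
    have h1 : A.det • gK = 0 := by
      have h2 := congrArg (fun w => A.adjugate *ᵥ w) h0
      simpa [Matrix.mulVec_mulVec, Matrix.adjugate_mul, Matrix.smul_mulVec,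
        Matrix.one_mulVec] using h2
    have h3 : A.det * gK i = 0 := congrFun h1 i
    rcases mul_eq_zero.mp h3 with h | h
    · exact absurd h hW
    · exact_mod_cast Subtype.ext h
  refine ⟨hli, ?_⟩
  have hy : ∀ y ∈ S'', π • y ∈ Submodule.span ↥OK (Set.range s) := by
    intro y hyS
    set yc : Fin d → K := fun j => b.repr (ι y) j with hyc
    set cram : Fin d → K := A.cramer yc with hcram
    have hupdet : ∀ i, cram i = (b.toMatrix (ι ∘ Function.update s i y)).det := by
      intro i
      rw [hcram, Matrix.cramer_apply]
      congr 1
      have hcomp : ι ∘ Function.update s i y = Function.update (ι ∘ s) i (ι y) := by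
        funext k
        by_cases hk : k = i
        · subst hk; simp
        · simp [Function.update_of_ne hk]
      rw [hcomp, Module.Basis.toMatrix_update]
    have hκ : ∀ i, v (↑π * cram i / A.det) ≤ 1 := by
      intro i
      rw [map_div₀,
        div_le_one (lt_of_le_of_ne (zero_le) (Ne.symm ((Valuation.ne_zero_iff v).mpr hW))),
        _root_.map_mul, hupdet i]
      exact hineq y hyS i
    have heq : ι (π • y) = ∑ i, (↑π * cram i / A.det) • ι (s i) := by
      apply b.ext_elem
      intro j
      rw [hrepr]
      have hgfun : (fun i => (↑π : K) * cram i / A.det) = (↑π / A.det) • cram := by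
        funext i; simp [div_eq_mul_inv]; ring
      rw [hgfun, Matrix.mulVec_smul, Matrix.mulVec_cramer]
      have : ((↑π : K) / A.det) • A.det • yc = (↑π : K) • yc := by
        rw [smul_smul, div_mul_cancel₀ _ hW]
      rw [this]
      have h5 : ι (π • y) = (↑π : K) • ι y := by
        rw [_root_.map_smul]; exact (halg _ _).symm
      rw [h5, _root_.map_smul]
      simp [hyc]
    have heq2 : π • y = ∑ i, (⟨↑π * cram i / A.det, (hv _).mp (hκ i)⟩ : ↥OK) • s i := by
      apply hinj
      rw [heq, map_sum]
      exact Finset.sum_congr rfl fun i _ => by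
        rw [_root_.map_smul]; exact halg ⟨↑π * cram i / A.det, (hv _).mp (hκ i)⟩ _
    rw [heq2]
    exact Submodule.sum_mem _ fun i _ =>
      Submodule.smul_mem _ _ (Submodule.subset_span ⟨i, rfl⟩)
  intro x
  have hx : x ∈ Submodule.span ↥OK S'' := by rw [hspan]; trivial
  induction hx using Submodule.span_induction with
  | mem z hz => exact hy z hz
  | zero => rw [smul_zero]; exact zero_mem _
  | add a c ha hc ha' hc' => rw [smul_add]; exact add_mem ha' hc'
  | smul r a ha ha' => rw [smul_comm]; exact Submodule.smul_mem _ _ ha'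
end



/-- The ideal `m̃_K`: it is all of `O_K` when the valuation is discrete (equivalently, the
maximal ideal is principal), and the maximal ideal otherwise. -/
noncomputable def tildeMax {K : Type*} [Field K] (O : ValuationSubring K) : Ideal ↥O :=
  open Classical in
  if (IsLocalRing.maximalIdeal ↥O).IsPrincipal then ⊤ else IsLocalRing.maximalIdeal ↥O

set_option maxHeartbeats 1000000

/-- Let `K` be a valuation field of height `1`, `M` an almost finitely
generated torsion-free `O_K`-module and `S ⊆ M` a generating subset.  Then `M` has finite rank
`d` and for every `π ∈ m̃_K` there are `d` elements of `S` forming a `π`-basis of `M`: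
they are linearly independent over `O_K` and the submodule they generate contains `π·M`. -/
theorem statement7 (K : Type*) [Field K] (OK : ValuationSubring K)
    (hnf : ¬ IsField ↥OK)
    (v : Valuation K NNReal) (hv : ∀ x : K, v x ≤ 1 ↔ x ∈ OK)
    (M : Type*) [AddCommGroup M] [Module ↥OK M]
    (htf : ∀ (r : ↥OK) (x : M), r • x = 0 → r = 0 ∨ x = 0)
    (hafg : ∀ ε : ↥OK, ε ∈ tildeMax OK →
      ∃ N : Submodule ↥OK M, N.FG ∧ ∀ x : M, ε • x ∈ N)
    (S : Set M) (hS : Submodule.span ↥OK S = ⊤) :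
    ∃ d : ℕ, Module.rank K (K ⊗[↥OK] M) = d ∧
      ∀ π : ↥OK, π ∈ tildeMax OK →
        ∃ s : Fin d → M, (∀ i, s i ∈ S) ∧ LinearIndependent ↥OK s ∧
          ∀ x : M, π • x ∈ Submodule.span ↥OK (Set.range s) := by
  classical
  have hval1 : ∀ r : ↥OK, v ↑r ≤ 1 := fun r => (hv _).mpr r.2
  have hvne : ∀ r : ↥OK, r ≠ 0 → v ↑r ≠ 0 := fun r hr =>
    (Valuation.ne_zero_iff v).mpr fun h => hr (Subtype.ext h)
  have hmaxlt : ∀ π : ↥OK, π ∈ IsLocalRing.maximalIdeal ↥OK → v ↑π < 1 := by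
    intro π hπ
    rcases lt_or_eq_of_le (hval1 π) with h | h
    · exact h
    exfalso
    have hne : (↑π : K) ≠ 0 := by
      intro h0; rw [h0] at h; simp at h
    have hinv : (↑π : K)⁻¹ ∈ OK := (hv _).mp (by rw [map_inv₀, h, inv_one])
    have hπu : IsUnit π := IsUnit.of_mul_eq_one (a := π) ⟨_, hinv⟩
      (Subtype.ext (by push_cast; field_simp))
    exact ((IsLocalRing.mem_maximalIdeal π).mp hπ) hπu
  -- the embedding into the base change
  set ι : M →ₗ[↥OK] K ⊗[↥OK] M := TensorProduct.mk ↥OK K M 1 with hιdef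
  have hιapp : ∀ m : M, ι m = (1 : K) ⊗ₜ[↥OK] m := fun m => rfl
  have hιinj : Function.Injective ι := by
    have h1 : Function.Injective (LocalizedModule.mkLinearMap (nonZeroDivisors ↥OK) M) := by
      intro a b hab
      rw [LocalizedModule.mkLinearMap_apply, LocalizedModule.mkLinearMap_apply,
        LocalizedModule.mk_eq] at hab
      obtain ⟨u, hu⟩ := hab
      simp only [one_smul] at hu
      have h2 : (↑u : ↥OK) • (a - b) = 0 := by
        rw [smul_sub, show ((↑u : ↥OK) • a) = u • a from rfl,
          show ((↑u : ↥OK) • b) = u • b from rfl, hu, sub_self]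
      rcases htf _ _ h2 with h | h
      · exact absurd h (nonZeroDivisors.ne_zero u.2)
      · exact sub_eq_zero.mp h
    letI : Module K (LocalizedModule (nonZeroDivisors ↥OK) M) :=
      LocalizedModule.moduleOfIsLocalization ..
    have bc := IsLocalizedModule.isBaseChange (nonZeroDivisors ↥OK) K
      (LocalizedModule.mkLinearMap (nonZeroDivisors ↥OK) M)
    intro a b hab
    apply h1
    have h3 := congrArg bc.equiv (by rw [hιapp a, hιapp b] at hab; exact hab :
      ((1:K) ⊗ₜ[↥OK] a : K ⊗[↥OK] M) = (1:K) ⊗ₜ[↥OK] b)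
    rwa [bc.equiv_tmul, bc.equiv_tmul, one_smul, one_smul] at h3
  -- tensor induction helper
  have htens : ∀ (P : Submodule K (K ⊗[↥OK] M)), (∀ m : M, ι m ∈ P) →
      ∀ w : K ⊗[↥OK] M, w ∈ P := by
    intro P hP w
    induction w using TensorProduct.induction_on with
    | zero => exact zero_mem _
    | tmul k m =>
      have h4 : (k ⊗ₜ[↥OK] m : K ⊗[↥OK] M) = k • ι m := by
        rw [hιapp, TensorProduct.smul_tmul', smul_eq_mul, mul_one]
      rw [h4]; exact P.smul_mem _ (hP m)
    | add a b ha hb => exact add_mem ha hb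
  have hspangen : ∀ T : Set M, Submodule.span ↥OK T = ⊤ →
      Submodule.span K (ι '' T) = ⊤ := by
    intro T hT
    rw [eq_top_iff]
    intro w _
    exact htens _ (fun m => aux_spanK OK ι T m (by rw [hT]; trivial)) w
  -- choose ε
  obtain ⟨ε, hεmem, hεne⟩ : ∃ ε : ↥OK, ε ∈ tildeMax OK ∧ ε ≠ 0 := by
    by_cases hp : (IsLocalRing.maximalIdeal ↥OK).IsPrincipal
    · exact ⟨1, by rw [tildeMax, if_pos hp]; trivial, one_ne_zero⟩
    · have hmb : IsLocalRing.maximalIdeal ↥OK ≠ ⊥ := fun h =>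
        hnf (IsLocalRing.isField_iff_maximalIdeal_eq.mpr h)
      obtain ⟨x, hx, hx0⟩ := Submodule.exists_mem_ne_zero_of_ne_bot hmb
      exact ⟨x, by rw [tildeMax, if_neg hp]; exact hx, hx0⟩
  obtain ⟨N, hNfg, hNmem⟩ := hafg ε hεmem
  obtain ⟨n0, xgen, hxgen⟩ := Submodule.fg_iff_exists_fin_generating_family.mp hNfg
  obtain ⟨nb, eN, -, heNli, heNspan⟩ := aux_extract OK v hv htf n0 xgen
  rw [hxgen] at heNspan
  -- linear independence of ι ∘ eN over K
  have hliK : LinearIndependent K (⇑ι ∘ eN) := by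
    rw [Fintype.linearIndependent_iff]
    intro g hg j
    set rr : Fin nb → ↥OK := fun i =>
      if h : v (g i) ≤ 1 then 1 else ⟨(g i)⁻¹, (hv _).mp (by
        rw [map_inv₀]
        exact inv_le_one_of_one_le₀ (le_of_not_ge h))⟩ with hrr
    have hrrne : ∀ i, rr i ≠ 0 := by
      intro i
      simp only [hrr]
      split_ifs with h
      · exact one_ne_zero
      · intro h0
        have : (g i)⁻¹ = 0 := congrArg Subtype.val h0
        rw [inv_eq_zero] at this
        rw [this] at h
        simp at h
    have hgirr : ∀ i, v (g i * ↑(rr i)) ≤ 1 := by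
      intro i
      simp only [hrr]
      split_ifs with h
      · simpa using h
      · have hgi : g i ≠ 0 := by
          intro h0; rw [h0] at h; simp at h
        simp [mul_inv_cancel₀ hgi]
    set r : ↥OK := ∏ i, rr i with hr
    have hrne : r ≠ 0 := Finset.prod_ne_zero_iff.mpr fun i _ => hrrne i
    have hcmem : ∀ i, g i * ↑r ∈ OK := by
      intro i
      rw [← hv]
      have hsplit : r = rr i * ∏ k ∈ Finset.univ.erase i, rr k := by
        rw [hr, ← Finset.mul_prod_erase Finset.univ rr (Finset.mem_univ i)]
      rw [hsplit]
      push_cast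
      rw [← mul_assoc, _root_.map_mul]
      refine mul_le_one' (hgirr i) ?_
      rw [map_prod]
      exact Finset.prod_le_one (fun _ _ => zero_le) (fun k _ => hval1 (rr k))
    set c : Fin nb → ↥OK := fun i => ⟨g i * ↑r, hcmem i⟩ with hcdef
    have hcz : ∀ i, c i = 0 := by
      have hsum : ∑ i, c i • eN i = 0 := by
        apply hιinj
        rw [map_sum, map_zero]
        have : ∀ i, ι (c i • eN i) = (↑r : K) • (g i • ι (eN i)) := by
          intro i
          rw [_root_.map_smul, ← algebraMap_smul K (c i) (ι (eN i))]
          show ((g i * ↑r : K)) • ι (eN i) = _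
          rw [mul_comm, mul_smul]
        simp_rw [this]
        rw [← Finset.smul_sum]
        have hg' : ∑ i, g i • ι (eN i) = 0 := by
          simpa only [Function.comp_apply] using hg
        rw [hg', smul_zero]
      exact fun i => Fintype.linearIndependent_iff.mp heNli c hsum i
    have := hcz j
    rw [hcdef] at this
    have h5 : g j * ↑r = 0 := congrArg Subtype.val this
    rcases mul_eq_zero.mp h5 with h | h
    · exact h
    · exact absurd (Subtype.ext h) hrne
  -- spanning
  have hNspanmem : ∀ m : M, ι m ∈ Submodule.span K (Set.range (⇑ι ∘ eN)) := by
    intro m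
    have hm1 : ε • m ∈ Submodule.span ↥OK (Set.range eN) := by
      rw [heNspan]; exact hNmem m
    have hm2 : ι (ε • m) ∈ Submodule.span K (ι '' Set.range eN) :=
      aux_spanK OK ι _ _ hm1
    rw [← Set.range_comp] at hm2
    have hm3 : ι m = (↑ε : K)⁻¹ • ι (ε • m) := by
      rw [_root_.map_smul, ← algebraMap_smul K ε (ι m),
        show (algebraMap ↥OK K ε : K) = ↑ε from rfl, smul_smul,
        inv_mul_cancel₀ ((fun h => hεne (Subtype.ext h)) : (↑ε : K) ≠ 0), one_smul]
    rw [hm3]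
    exact Submodule.smul_mem _ _ hm2
  have hspK : ⊤ ≤ Submodule.span K (Set.range (⇑ι ∘ eN)) := fun w _ =>
    htens _ hNspanmem w
  set bV0 : Module.Basis (Fin nb) K (K ⊗[↥OK] M) := Module.Basis.mk hliK hspK with hbV0
  have : Module.Finite K (K ⊗[↥OK] M) := Module.Finite.of_basis bV0
  set d := Module.finrank K (K ⊗[↥OK] M) with hd
  have hrank : Module.rank K (K ⊗[↥OK] M) = d := (Module.finrank_eq_rank K _).symm
  have hnbd : nb = d := by
    rw [hd, Module.finrank_eq_card_basis bV0, Fintype.card_fin]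
  set b : Module.Basis (Fin d) K (K ⊗[↥OK] M) := bV0.reindex (finCongr hnbd) with hb
  refine ⟨d, hrank, ?_⟩
  intro π hπ
  set W : (Fin d → M) → NNReal := fun t => v ((b.toMatrix (⇑ι ∘ t)).det) with hWdef
  -- coordinate bound
  have hcoordbound : ∀ (m : M) (j : Fin d), v (b.repr (ι m) j) ≤ (v ↑ε)⁻¹ := by
    intro m j
    have hm1 : ε • m ∈ Submodule.span ↥OK (Set.range eN) := by
      rw [heNspan]; exact hNmem m
    obtain ⟨cf, hcf⟩ := (Submodule.mem_span_range_iff_exists_fun ↥OK).mp hm1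
    have h6 : ι (ε • m) = ∑ k, (↑(cf k) : K) • bV0 k := by
      rw [← hcf, map_sum]
      refine Finset.sum_congr rfl fun k _ => ?_
      rw [_root_.map_smul, ← algebraMap_smul K (cf k) (ι (eN k)), Module.Basis.coe_mk]
      rfl
    have h7 : bV0.repr (ι (ε • m)) = Finsupp.equivFunOnFinite.symm (fun k => (↑(cf k) : K)) := by
      rw [h6]
      have := bV0.repr_sum_self (fun k => (↑(cf k) : K))
      ext k
      rw [this]
      rfl
    have h8 : b.repr (ι m) j = bV0.repr (ι m) ((finCongr hnbd).symm j) := by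
      rw [hb, Module.Basis.repr_reindex_apply]
    set j' := (finCongr hnbd).symm j
    have h9 : (↑ε : K) * bV0.repr (ι m) j' = ↑(cf j') := by
      have : (↑ε : K) • ι m = ι (ε • m) := by
        rw [_root_.map_smul]; exact algebraMap_smul K ε (ι m)
      calc (↑ε : K) * bV0.repr (ι m) j' = bV0.repr ((↑ε : K) • ι m) j' := by
            rw [_root_.map_smul]; rfl
        _ = bV0.repr (ι (ε • m)) j' := by rw [this]
        _ = ↑(cf j') := by rw [h7]; rfl
    have hεK : (↑ε : K) ≠ 0 := fun h => hεne (Subtype.ext h)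
    have h10 : bV0.repr (ι m) j' = ↑(cf j') / ↑ε := by
      field_simp
      rw [mul_comm] at h9
      exact h9
    rw [h8, h10, map_div₀, div_eq_mul_inv]
    calc v ↑(cf j') * (v ↑ε)⁻¹ ≤ 1 * (v ↑ε)⁻¹ := mul_le_mul_left (hval1 _) _
      _ = (v ↑ε)⁻¹ := one_mul _
  -- determinant bound
  have hWbound : ∀ t : Fin d → M, W t ≤ ((v ↑ε)⁻¹) ^ d := by
    intro t
    rw [hWdef]
    show v ((b.toMatrix (⇑ι ∘ t)).det) ≤ _
    rw [Matrix.det_apply]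
    apply Valuation.map_sum_le
    intro σ _
    have h11 : v (Equiv.Perm.sign σ • ∏ i, b.toMatrix (⇑ι ∘ t) (σ i) i)
        = v (∏ i, b.toMatrix (⇑ι ∘ t) (σ i) i) := by
      rcases Int.units_eq_one_or (Equiv.Perm.sign σ) with h | h
      · rw [h, one_smul]
      · rw [h, Units.smul_def, Units.val_neg, Units.val_one, neg_smul, one_smul,
          Valuation.map_neg]
    rw [h11, map_prod]
    calc ∏ i, v (b.toMatrix (⇑ι ∘ t) (σ i) i) ≤ ∏ _i : Fin d, (v ↑ε)⁻¹ := by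
          apply Finset.prod_le_prod'
          intro i _
          rw [Module.Basis.toMatrix_apply]
          exact hcoordbound _ _
      _ = ((v ↑ε)⁻¹) ^ d := by rw [Finset.prod_const, Finset.card_univ, Fintype.card_fin]
  -- existence of a tuple with nonzero determinant
  have hW0 : ∀ T : Set M, Submodule.span ↥OK T = ⊤ →
      ∃ t : Fin d → M, (∀ i, t i ∈ T) ∧ W t ≠ 0 := by
    intro T hT
    have hsp := hspangen T hT
    obtain ⟨bset, hbsub, hbspan, hbli⟩ := exists_linearIndependent K (ι '' T)
    rw [hsp] at hbspan
    have hble : ⊤ ≤ Submodule.span K (Set.range ((↑) : ↥bset → K ⊗[↥OK] M)) := by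
      rw [Subtype.range_coe, hbspan]
    set b2 : Module.Basis ↥bset K (K ⊗[↥OK] M) := Module.Basis.mk hbli hble with hb2
    have : Fintype ↥bset := FiniteDimensional.fintypeBasisIndex b2
    have hcard : Fintype.card ↥bset = d := by
      rw [← Module.finrank_eq_card_basis b2]
    set e2 : Fin d ≃ ↥bset := (Fintype.equivFinOfCardEq hcard).symm with he2
    have hchoice : ∀ i : Fin d, ∃ m : M, m ∈ T ∧ ι m = ↑(e2 i) := by
      intro i
      obtain ⟨m, hm, hms⟩ := hbsub (e2 i).2
      exact ⟨m, hm, hms⟩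
    choose t ht1 ht2 using hchoice
    refine ⟨t, ht1, ?_⟩
    have hmat : ⇑ι ∘ t = ⇑(b2.reindex e2.symm) := by
      funext i
      rw [Function.comp_apply, ht2 i, Module.Basis.reindex_apply, Equiv.symm_symm, hb2,
        Module.Basis.mk_apply]
    rw [hWdef]
    show v ((b.toMatrix (⇑ι ∘ t)).det) ≠ 0
    rw [hmat]
    have : Invertible (b.toMatrix ⇑(b2.reindex e2.symm)) :=
      Module.Basis.invertibleToMatrix b (b2.reindex e2.symm)
    exact (Valuation.ne_zero_iff v).mpr (Matrix.isUnit_det_of_invertible _).ne_zero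
  -- the good tuple
  obtain ⟨S'', hS''sub, hS''span, s, hsmem, hsW, hsineq⟩ :
      ∃ S'' ⊆ S, Submodule.span ↥OK S'' = ⊤ ∧ ∃ s : Fin d → M, (∀ i, s i ∈ S'') ∧
        W s ≠ 0 ∧ ∀ y ∈ S'', ∀ i, v ↑π * W (Function.update s i y) ≤ W s := by
    by_cases hp : (IsLocalRing.maximalIdeal ↥OK).IsPrincipal
    · -- discrete case: M is finitely generated, use a finite generating subset of S
      have h1 : (1 : ↥OK) ∈ tildeMax OK := by rw [tildeMax, if_pos hp]; trivial
      obtain ⟨N1, hN1fg, hN1⟩ := hafg 1 h1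
      have hN1top : N1 = ⊤ := eq_top_iff.mpr fun x _ => by simpa using hN1 x
      rw [hN1top] at hN1fg
      obtain ⟨G, hG⟩ := hN1fg
      have hGmem : ∀ g ∈ G, (g : M) ∈ Submodule.span ↥OK S := by
        intro g _; rw [hS]; trivial
      have hex : ∀ g ∈ G, ∃ T0 : Finset M, ↑T0 ⊆ S ∧ (g : M) ∈ Submodule.span ↥OK (↑T0 : Set M) := by
        intro g hg
        obtain ⟨T0, hT0sub, hT0mem⟩ := Submodule.mem_span_finite_of_mem_span (hGmem g hg)
        exact ⟨T0, hT0sub, hT0mem⟩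
      choose! T0 hT0sub hT0mem using hex
      set S0 : Finset M := G.biUnion T0 with hS0
      have hS0sub : (↑S0 : Set M) ⊆ S := by
        intro x hx
        rw [hS0] at hx
        simp only [Finset.coe_biUnion, Set.mem_iUnion, Finset.mem_coe] at hx
        obtain ⟨g, hg, hx⟩ := hx
        exact hT0sub g hg hx
      have hS0span : Submodule.span ↥OK (↑S0 : Set M) = ⊤ := by
        rw [eq_top_iff, ← hG, Submodule.span_le]
        intro g hg
        refine Submodule.span_le.mpr ?_ (hT0mem g hg)
        intro z hz
        apply Submodule.subset_span
        rw [hS0]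
        simp only [Finset.coe_biUnion, Set.mem_iUnion, Finset.mem_coe]
        exact ⟨g, hg, hz⟩
      obtain ⟨t0, ht0mem, ht0W⟩ := hW0 ↑S0 hS0span
      have hne : Nonempty (Fin d → ↥S0) := ⟨fun i => ⟨t0 i, ht0mem i⟩⟩
      obtain ⟨u, hu⟩ := Finite.exists_max (fun u : Fin d → ↥S0 => W (fun i => ↑(u i)))
      refine ⟨↑S0, hS0sub, hS0span, fun i => ↑(u i), fun i => (u i).2, ?_, ?_⟩
      · intro h0
        apply ht0W
        have h2 := hu (fun i => ⟨t0 i, ht0mem i⟩)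
        rw [h0] at h2
        exact le_antisymm (by exact_mod_cast h2) (zero_le)
      · intro y hy i
        have hfun : (fun k => (↑(Function.update u i ⟨y, hy⟩ k) : M))
            = Function.update (fun k => (↑(u k) : M)) i y := by
          funext k
          by_cases hk : k = i
          · subst hk; simp
          · simp [Function.update_of_ne hk]
        have h2 : W (Function.update (fun k => (↑(u k) : M)) i y)
            ≤ W (fun i => ↑(u i)) := by
          rw [← hfun]
          exact hu (Function.update u i ⟨y, hy⟩)
        calc v ↑π * W (Function.update (fun k => (↑(u k) : M)) i y)
            ≤ 1 * W (Function.update (fun k => (↑(u k) : M)) i y) :=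
              mul_le_mul_left (hval1 π) _
          _ = _ := one_mul _
          _ ≤ W (fun i => ↑(u i)) := h2
    · -- non-discrete case: use the supremum with a margin
      have hπm : π ∈ IsLocalRing.maximalIdeal ↥OK := by
        rw [tildeMax, if_neg hp] at hπ; exact hπ
      have hπlt : v ↑π < 1 := hmaxlt π hπm
      obtain ⟨t0, ht0mem, ht0W⟩ := hW0 S hS
      have hneσ : Nonempty {t : Fin d → M // ∀ i, t i ∈ S} := ⟨⟨t0, ht0mem⟩⟩
      have hbdd : BddAbove (Set.range (fun t : {t : Fin d → M // ∀ i, t i ∈ S} => W t.1)) := by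
        refine ⟨((v ↑ε)⁻¹) ^ d, ?_⟩
        rintro x ⟨t, rfl⟩
        exact hWbound t.1
      set cs := ⨆ t : {t : Fin d → M // ∀ i, t i ∈ S}, W t.1 with hcs
      have hcpos : 0 < cs := by
        refine lt_of_lt_of_le ?_ (le_ciSup hbdd ⟨t0, ht0mem⟩)
        exact pos_iff_ne_zero.mpr ht0W
      have hlt : v ↑π * cs < cs := mul_lt_of_lt_one_left hcpos hπlt
      obtain ⟨t, htgt⟩ := exists_lt_of_lt_ciSup hlt
      refine ⟨S, Set.Subset.refl S, hS, t.1, t.2, ?_, ?_⟩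
      · exact (lt_of_le_of_lt (zero_le) htgt).ne'
      · intro y hy i
        have hupd : ∀ k, Function.update t.1 i y k ∈ S := by
          intro k
          by_cases hk : k = i
          · subst hk; simpa using hy
          · rw [Function.update_of_ne hk]; exact t.2 k
        have hup : W (Function.update t.1 i y) ≤ cs :=
          le_ciSup hbdd ⟨Function.update t.1 i y, hupd⟩
        calc v ↑π * W (Function.update t.1 i y) ≤ v ↑π * cs := mul_le_mul_right hup _
          _ ≤ W t.1 := htgt.le
  -- conclude via the Cramer argument
  obtain ⟨hli, hcont⟩ := aux_core OK v hv ι hιinj b S'' hS''span π s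
    ((Valuation.ne_zero_iff v).mp hsW)
    (fun y hy i => hsineq y hy i)
  exact ⟨s, fun i => hS''sub (hsmem i), hli, hcont⟩
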